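/- For the max-linear model with nonnegative coefficients (τ^M_L)_{∅≠L⊆M} realizing extremal coefficients θ(A) = ∑_{L⊆M : L∩A≠∅} τ^M_L, the dependency set equals the polytope {x ∈ [0,∞)^M : ⟨x, 1_L⟩ ≤ θ(L) for all nonempty L ⊆ M}; in particular for every x ∈ [0,∞)^M with coordinates ordered x_{t_1} ≥ ⋯ ≥ x_{t_m}, and every y in the polytope, ⟨x,y⟩ ≤ ∑_{i=1}^m x_{t_i} (θ({t_1,…,t_i}) − θ({t_1,…,t_{i−1}})). -/

import Mathlib

/-- `θ(A) = ∑_{L ⊆ M, L ∩ A ≠ ∅} τ^M_L` for the max-linear model on `M = Fin m`. -/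
def thetaML (m : ℕ) (τ : Finset (Fin m) → ℝ) (A : Finset (Fin m)) : ℝ :=
  ∑ L ∈ Finset.univ.powerset.filter (fun L => (L ∩ A).Nonempty), τ L

/-- The stable tail dependence function of the max-linear model:
`ℓ(x) = ∑_{∅ ≠ L ⊆ M} τ^M_L · max_{t ∈ L} x_t`. -/
def ellML (m : ℕ) (τ : Finset (Fin m) → ℝ) (x : Fin m → ℝ) : ℝ :=
  ∑ L : Finset (Fin m), if h : L.Nonempty then τ L * L.sup' h x else 0

/-- The polytope `{x ≥ 0 : ⟨x, 1_L⟩ ≤ θ(L) for all nonempty L ⊆ M}`. -/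
def polytopeML (m : ℕ) (τ : Finset (Fin m) → ℝ) : Set (Fin m → ℝ) :=
  {y | (∀ i, 0 ≤ y i) ∧ ∀ L : Finset (Fin m), L.Nonempty → ∑ i ∈ L, y i ≤ thetaML m τ L}

section MLaux
open Finset

lemma abel_ineq : ∀ (n : ℕ) (a b c : ℕ → ℝ),
    (∀ k, k < n → 0 ≤ a k) →
    (∀ j k, j ≤ k → k < n → a k ≤ a j) →
    (∀ k, k ≤ n → ∑ j ∈ range k, b j ≤ ∑ j ∈ range k, c j) →
    ∑ k ∈ range n, a k * b k ≤ ∑ k ∈ range n, a k * c k := by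
  intro n
  induction n with
  | zero => intro a b c _ _ _; simp
  | succ n ih =>
    intro a b c ha0 hadec hbc
    have key : ∀ d : ℕ → ℝ, ∑ k ∈ range (n+1), a k * d k
        = ∑ k ∈ range n, (a k - a n) * d k + a n * ∑ j ∈ range (n+1), d j := by
      intro d
      have h1 : ∀ k ∈ range (n+1), a k * d k = (a k - a n) * d k + a n * d k := by
        intro k _; ring
      rw [Finset.sum_congr rfl h1, Finset.sum_add_distrib, ← Finset.mul_sum,
        Finset.sum_range_succ (fun k => (a k - a n) * d k)]
      simp
    rw [key b, key c]
    have h2 : ∑ k ∈ range n, (a k - a n) * b k ≤ ∑ k ∈ range n, (a k - a n) * c k := by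
      apply ih
      · intro k hk; have := hadec k n (le_of_lt hk) (Nat.lt_succ_self n); linarith
      · intro j k hjk hk
        have := hadec j k hjk (by omega); linarith
      · intro k hk; exact hbc k (by omega)
    have h3 : a n * ∑ j ∈ range (n+1), b j ≤ a n * ∑ j ∈ range (n+1), c j :=
      mul_le_mul_of_nonneg_left (hbc (n+1) le_rfl) (ha0 n (Nat.lt_succ_self n))
    linarith

variable {m : ℕ}

/-- the set of the first `k` indices under the ordering `σ` -/
def FSet (σ : Equiv.Perm (Fin m)) (k : ℕ) : Finset (Fin m) :=
  univ.filter (fun i => (σ.symm i : ℕ) < k)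

/-- the family of sets `J` whose `σ`-first element is `i` -/
def firstSets (σ : Equiv.Perm (Fin m)) (i : Fin m) : Finset (Finset (Fin m)) :=
  univ.powerset.filter (fun J => i ∈ J ∧ ∀ j ∈ J, (σ.symm i : ℕ) ≤ (σ.symm j : ℕ))

lemma mem_firstSets {σ : Equiv.Perm (Fin m)} {i : Fin m} {J : Finset (Fin m)} :
    J ∈ firstSets σ i ↔ i ∈ J ∧ ∀ j ∈ J, (σ.symm i : ℕ) ≤ (σ.symm j : ℕ) := by
  simp [firstSets]

lemma inter_FSet_nonempty {σ : Equiv.Perm (Fin m)} {J : Finset (Fin m)} {k : ℕ} :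
    (J ∩ FSet σ k).Nonempty ↔ ∃ j ∈ J, (σ.symm j : ℕ) < k := by
  constructor
  · rintro ⟨j, hj⟩
    simp only [FSet, mem_inter, mem_filter, mem_univ, true_and] at hj
    exact ⟨j, hj.1, hj.2⟩
  · rintro ⟨j, hj1, hj2⟩
    exact ⟨j, by simp [FSet, mem_inter, hj1, hj2]⟩

lemma theta_diff (τ : Finset (Fin m) → ℝ) (σ : Equiv.Perm (Fin m)) (k : ℕ) (hk : k < m) :
    thetaML m τ (FSet σ (k+1)) - thetaML m τ (FSet σ k)
      = ∑ J ∈ firstSets σ (σ ⟨k, hk⟩), τ J := by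
  have hsub : univ.powerset.filter (fun J => (J ∩ FSet σ k).Nonempty)
      ⊆ univ.powerset.filter (fun J : Finset (Fin m) => (J ∩ FSet σ (k+1)).Nonempty) := by
    intro J hJ
    simp only [mem_filter, inter_FSet_nonempty] at hJ ⊢
    obtain ⟨h1, j, hj1, hj2⟩ := hJ
    exact ⟨h1, j, hj1, by omega⟩
  rw [thetaML, thetaML, ← Finset.sum_sdiff_eq_sub hsub]
  congr 1
  ext J
  simp only [mem_sdiff, mem_filter, mem_powerset, subset_univ, true_and,
    inter_FSet_nonempty, mem_firstSets, not_and, not_exists, not_and, not_lt]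
  constructor
  · rintro ⟨⟨j, hj1, hj2⟩, h2⟩
    have hkj : (σ.symm j : ℕ) = k := le_antisymm (by omega) (h2 j hj1)
    have hjeq : j = σ ⟨k, hk⟩ := by
      have : σ.symm j = ⟨k, hk⟩ := Fin.ext hkj
      rw [← this]; simp
    refine ⟨hjeq ▸ hj1, ?_⟩
    intro j' hj'
    simpa using h2 j' hj'
  · rintro ⟨h1, h2⟩
    refine ⟨⟨σ ⟨k, hk⟩, h1, by simp⟩, ?_⟩
    intro j hj
    simpa using h2 j hj

lemma theta_mono (τ : Finset (Fin m) → ℝ) (hτ : ∀ L : Finset (Fin m), L.Nonempty → 0 ≤ τ L)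
    {A B : Finset (Fin m)} (h : A ⊆ B) : thetaML m τ A ≤ thetaML m τ B := by
  apply Finset.sum_le_sum_of_subset_of_nonneg
  · intro J hJ
    simp only [mem_filter] at hJ ⊢
    obtain ⟨h1, j, hj⟩ := hJ
    rw [mem_inter] at hj
    exact ⟨h1, j, mem_inter.2 ⟨hj.1, h hj.2⟩⟩
  · intro J hJ _
    simp only [mem_filter] at hJ
    obtain ⟨-, j, hj⟩ := hJ
    exact hτ J ⟨j, (mem_inter.1 hj).1⟩

lemma theta_empty (τ : Finset (Fin m) → ℝ) : thetaML m τ (∅ : Finset (Fin m)) = 0 := by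
  rw [thetaML]
  apply Finset.sum_eq_zero
  intro J hJ
  simp at hJ

lemma FSet_zero (σ : Equiv.Perm (Fin m)) : FSet σ 0 = ∅ := by
  simp [FSet]

lemma FSet_mono (σ : Equiv.Perm (Fin m)) {j k : ℕ} (h : j ≤ k) : FSet σ j ⊆ FSet σ k := by
  intro i hi
  simp only [FSet, mem_filter, mem_univ, true_and] at hi ⊢
  omega

lemma FSet_succ (σ : Equiv.Perm (Fin m)) (k : ℕ) (hk : k < m) :
    FSet σ (k+1) = insert (σ ⟨k, hk⟩) (FSet σ k) := by
  ext i
  simp only [FSet, mem_filter, mem_univ, true_and, mem_insert]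
  constructor
  · intro h
    rcases Nat.lt_succ_iff_lt_or_eq.1 h with h | h
    · exact Or.inr h
    · left
      have : σ.symm i = ⟨k, hk⟩ := Fin.ext h
      rw [← this]; simp
  · rintro (h | h)
    · subst h; simp
    · omega

/-- `aF x σ` is `x ∘ σ` as a function on `ℕ`. -/
def aF (x : Fin m → ℝ) (σ : Equiv.Perm (Fin m)) : ℕ → ℝ :=
  fun k => if h : k < m then x (σ ⟨k, h⟩) else 0

lemma sum_aF_FSet (y : Fin m → ℝ) (σ : Equiv.Perm (Fin m)) :
    ∀ k, k ≤ m → ∑ j ∈ range k, aF y σ j = ∑ i ∈ FSet σ k, y i := by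
  intro k
  induction k with
  | zero => intro _; simp [FSet_zero]
  | succ k ih =>
    intro hk
    have hkm : k < m := hk
    rw [Finset.sum_range_succ, ih (le_of_lt hkm), FSet_succ σ k hkm,
      Finset.sum_insert (by simp [FSet])]
    simp [aF, hkm]
    ring



/-- the increments `θ(F_{k+1}) - θ(F_k)`. -/
def cF (τ : Finset (Fin m) → ℝ) (σ : Equiv.Perm (Fin m)) : ℕ → ℝ :=
  fun k => thetaML m τ (FSet σ (k+1)) - thetaML m τ (FSet σ k)

lemma sum_cF (τ : Finset (Fin m) → ℝ) (σ : Equiv.Perm (Fin m)) (k : ℕ) :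
    ∑ j ∈ range k, cF τ σ j = thetaML m τ (FSet σ k) := by
  simp only [cF]
  rw [Finset.sum_range_sub (fun j => thetaML m τ (FSet σ j)) k]
  simp [FSet_zero, theta_empty]

/-- the main upper bound : `⟨x,y⟩ ≤ ∑_k x_{σ(k)} (θ(F_{k+1}) - θ(F_k))`. -/
lemma key_upper (τ : Finset (Fin m) → ℝ) (hτ : ∀ L : Finset (Fin m), L.Nonempty → 0 ≤ τ L)
    (x : Fin m → ℝ) (hx : ∀ i, 0 ≤ x i) (σ : Equiv.Perm (Fin m))
    (hdec : ∀ j k : Fin m, j ≤ k → x (σ k) ≤ x (σ j))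
    (y : Fin m → ℝ) (hy : y ∈ polytopeML m τ) :
    ∑ i, x i * y i ≤ ∑ k ∈ range m, aF x σ k * cF τ σ k := by
  have hre : ∑ i, x i * y i = ∑ k ∈ range m, aF x σ k * aF y σ k := by
    rw [← Equiv.sum_comp σ (fun i => x i * y i)]
    rw [← Fin.sum_univ_eq_sum_range (fun k => aF x σ k * aF y σ k) m]
    apply Finset.sum_congr rfl
    intro k _
    simp [aF, k.is_lt]
  rw [hre]
  apply abel_ineq m (aF x σ) (aF y σ) (cF τ σ)
  · intro k hk; simp only [aF, dif_pos hk]; exact hx _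
  · intro j k hjk hk
    have hj : j < m := lt_of_le_of_lt hjk hk
    simp only [aF, dif_pos hk, dif_pos hj]
    exact hdec ⟨j, hj⟩ ⟨k, hk⟩ hjk
  · intro k hk
    rw [sum_aF_FSet y σ k hk, sum_cF]
    rcases Finset.eq_empty_or_nonempty (FSet σ k) with h | h
    · rw [h]; simp [theta_empty]
    · exact hy.2 _ h

lemma cF_eq (τ : Finset (Fin m) → ℝ) (σ : Equiv.Perm (Fin m)) (i : Fin m) :
    cF τ σ (σ.symm i : ℕ) = ∑ J ∈ firstSets σ i, τ J := by
  rw [cF, theta_diff τ σ _ (σ.symm i).is_lt]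
  congr 2
  simp

lemma ystar_mem (τ : Finset (Fin m) → ℝ) (hτ : ∀ L : Finset (Fin m), L.Nonempty → 0 ≤ τ L)
    (σ : Equiv.Perm (Fin m)) :
    (fun i => cF τ σ (σ.symm i : ℕ)) ∈ polytopeML m τ := by
  constructor
  · intro i
    show 0 ≤ cF τ σ ((σ.symm i : ℕ))
    rw [cF_eq]
    apply Finset.sum_nonneg
    intro J hJ
    exact hτ J ⟨i, (mem_firstSets.1 hJ).1⟩
  · intro L hL
    have hdisj : (L : Set (Fin m)).PairwiseDisjoint (firstSets σ) := by
      intro i _ i' _ hne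
      simp only [Function.onFun]
      rw [Finset.disjoint_left]
      intro J hJ hJ'
      rw [mem_firstSets] at hJ hJ'
      apply hne
      have h1 := hJ.2 i' hJ'.1
      have h2 := hJ'.2 i hJ.1
      have : σ.symm i = σ.symm i' := Fin.ext (le_antisymm h1 h2)
      exact σ.symm.injective this
    calc ∑ i ∈ L, (fun i => cF τ σ (σ.symm i : ℕ)) i
        = ∑ i ∈ L, ∑ J ∈ firstSets σ i, τ J := by
          apply Finset.sum_congr rfl; intro i _; exact cF_eq τ σ i
      _ = ∑ J ∈ L.biUnion (firstSets σ), τ J := (Finset.sum_biUnion hdisj).symm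
      _ ≤ ∑ J ∈ univ.powerset.filter (fun J => (J ∩ L).Nonempty), τ J := by
          apply Finset.sum_le_sum_of_subset_of_nonneg
          · intro J hJ
            rw [Finset.mem_biUnion] at hJ
            obtain ⟨i, hiL, hJ⟩ := hJ
            rw [mem_firstSets] at hJ
            simp only [mem_filter, mem_powerset, subset_univ, true_and]
            exact ⟨i, mem_inter.2 ⟨hJ.1, hiL⟩⟩
          · intro J hJ _
            simp only [mem_filter] at hJ
            obtain ⟨-, j, hj⟩ := hJ
            exact hτ J ⟨j, (mem_inter.1 hj).1⟩
      _ = thetaML m τ L := rfl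

lemma sum_ac_eq_ell (τ : Finset (Fin m) → ℝ) (x : Fin m → ℝ) (σ : Equiv.Perm (Fin m))
    (hdec : ∀ j k : Fin m, j ≤ k → x (σ k) ≤ x (σ j)) :
    ∑ k ∈ range m, aF x σ k * cF τ σ k = ellML m τ x := by
  have step1 : ∑ k ∈ range m, aF x σ k * cF τ σ k
      = ∑ k : Fin m, ∑ J ∈ firstSets σ (σ k), x (σ k) * τ J := by
    rw [← Fin.sum_univ_eq_sum_range (fun k => aF x σ k * cF τ σ k) m]
    apply Finset.sum_congr rfl
    intro k _
    have h1 : aF x σ (k : ℕ) = x (σ k) := by simp [aF, k.is_lt]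
    have h2 : cF τ σ (k : ℕ) = ∑ J ∈ firstSets σ (σ k), τ J := by
      have := cF_eq τ σ (σ k)
      simpa using this
    rw [h1, h2, Finset.mul_sum]
  rw [step1]
  simp only [firstSets, Finset.sum_filter]
  rw [Finset.sum_comm]
  rw [Finset.powerset_univ, ellML]
  apply Finset.sum_congr rfl
  intro J _
  by_cases hJ : J.Nonempty
  · rw [dif_pos hJ]
    have himg : (J.image (fun j => σ.symm j)).Nonempty := hJ.image _
    set k₀ := (J.image (fun j => σ.symm j)).min' himg with hk₀
    have hk₀mem : k₀ ∈ J.image (fun j => σ.symm j) := Finset.min'_mem _ _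
    obtain ⟨j₀, hj₀J, hj₀⟩ := Finset.mem_image.1 hk₀mem
    have hσk₀ : σ k₀ ∈ J := by rw [← hj₀]; simpa using hj₀J
    have hk₀le : ∀ j ∈ J, k₀ ≤ σ.symm j := fun j hj =>
      Finset.min'_le _ _ (Finset.mem_image_of_mem _ hj)
    rw [Finset.sum_eq_single k₀]
    · rw [if_pos]
      · have hx : x (σ k₀) = J.sup' hJ x := by
          apply le_antisymm
          · exact Finset.le_sup' x hσk₀
          · apply Finset.sup'_le
            intro j hj
            have := hdec k₀ (σ.symm j) (hk₀le j hj)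
            simpa using this
        rw [hx]; ring
      · refine ⟨hσk₀, ?_⟩
        intro j hj
        simp only [Equiv.symm_apply_apply]
        exact Fin.le_def.1 (hk₀le j hj)
    · intro k _ hkne
      rw [if_neg]
      rintro ⟨h1, h2⟩
      apply hkne
      apply le_antisymm
      · have := h2 j₀ hj₀J
        simp only [Equiv.symm_apply_apply] at this
        rw [hj₀] at this
        exact Fin.le_def.2 this
      · exact hk₀le (σ k) h1 |>.trans_eq (by simp)
    · intro h; exact absurd (Finset.mem_univ k₀) h
  · rw [dif_neg hJ]
    apply Finset.sum_eq_zero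
    intro k _
    rw [if_neg]
    rintro ⟨h1, -⟩
    exact hJ ⟨σ k, h1⟩


lemma ystar_dot {m : ℕ} (τ : Finset (Fin m) → ℝ) (x : Fin m → ℝ) (σ : Equiv.Perm (Fin m)) :
    ∑ i, x i * cF τ σ (σ.symm i : ℕ) = ∑ k ∈ Finset.range m, aF x σ k * cF τ σ k := by
  rw [← Equiv.sum_comp σ (fun i => x i * cF τ σ (σ.symm i : ℕ)),
    ← Fin.sum_univ_eq_sum_range (fun k => aF x σ k * cF τ σ k) m]
  apply Finset.sum_congr rfl
  intro k _
  simp [aF, k.is_lt]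

end MLaux

/-- For the max-linear model with nonnegative coefficients `(τ^M_L)`, the dependency set
equals the polytope `{x ≥ 0 : ⟨x, 1_L⟩ ≤ θ(L), ∅ ≠ L ⊆ M}`, i.e. the support function of the
polytope on the nonnegative orthant is the stable tail dependence function `ℓ_M`; in
particular, for every `x ≥ 0` with decreasingly ordered coordinates and every `y` in the
polytope, `⟨x,y⟩ ≤ ∑ᵢ x_{tᵢ}(θ({t₁,…,tᵢ}) − θ({t₁,…,t_{i−1}}))`. -/
theorem maxlinear_dependency_set_eq_polytope (m : ℕ) (τ : Finset (Fin m) → ℝ)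
    (hτ : ∀ L : Finset (Fin m), L.Nonempty → 0 ≤ τ L) :
    (∀ x : Fin m → ℝ, (∀ i, 0 ≤ x i) →
      IsLUB {r : ℝ | ∃ y ∈ polytopeML m τ, r = ∑ i, x i * y i} (ellML m τ x)) ∧
    (∀ x : Fin m → ℝ, (∀ i, 0 ≤ x i) → (∀ i j : Fin m, i ≤ j → x j ≤ x i) →
      ∀ y ∈ polytopeML m τ,
        ∑ i, x i * y i ≤
          ∑ i, x i * (thetaML m τ (Finset.Iic i) - thetaML m τ (Finset.Iio i))) := by
  constructor
  · intro x hx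
    set σ := Tuple.sort (fun i => -x i) with hσ
    have hdec : ∀ j k : Fin m, j ≤ k → x (σ k) ≤ x (σ j) := by
      intro j k hjk
      have := Tuple.monotone_sort (fun i => -x i) hjk
      simpa using this
    have hell : ∑ k ∈ Finset.range m, aF x σ k * cF τ σ k = ellML m τ x :=
      sum_ac_eq_ell τ x σ hdec
    apply IsGreatest.isLUB
    constructor
    · exact ⟨fun i => cF τ σ (σ.symm i : ℕ), ystar_mem τ hτ σ,
        by rw [ystar_dot τ x σ, hell]⟩
    · rintro r ⟨y, hy, rfl⟩
      rw [← hell]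
      exact key_upper τ hτ x hx σ hdec y hy
  · intro x hx hord y hy
    have hdec : ∀ j k : Fin m, j ≤ k → x ((Equiv.refl (Fin m)) k) ≤ x ((Equiv.refl (Fin m)) j) := by
      intro j k hjk; simpa using hord j k hjk
    have h1 := key_upper τ hτ x hx (Equiv.refl (Fin m)) hdec y hy
    refine h1.trans_eq ?_
    rw [← Fin.sum_univ_eq_sum_range
      (fun k => aF x (Equiv.refl (Fin m)) k * cF τ (Equiv.refl (Fin m)) k) m]
    apply Finset.sum_congr rfl
    intro k _
    have hIio : FSet (Equiv.refl (Fin m)) (k : ℕ) = Finset.Iio k := by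
      ext i
      simp only [FSet, Finset.mem_filter, Finset.mem_univ, true_and, Equiv.refl_symm,
        Equiv.refl_apply, Finset.mem_Iio, Fin.lt_def]
      simp
    have hIic : FSet (Equiv.refl (Fin m)) ((k : ℕ) + 1) = Finset.Iic k := by
      ext i
      simp only [FSet, Finset.mem_filter, Finset.mem_univ, true_and, Equiv.refl_symm,
        Equiv.refl_apply, Finset.mem_Iic, Fin.le_def]
      simp
    have ha : aF x (Equiv.refl (Fin m)) (k : ℕ) = x k := by
      simp [aF, k.is_lt]
    rw [ha, cF, hIio, hIic]
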